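/- arXiv:1311.6191 — 3 statements merged into one kernel-verified Lean document; each statement's English description precedes it below -/
import Mathlib

section
/- For a measurable function f on a measure space and any t > 0, the difference t(f**(t) - f*(t)) equals the integral from f*(t) to infinity of the distribution function μ_f(s) ds, where f* is the decreasing rearrangement, f**(t) = (1/t)∫_0^t f*(s) ds, and μ_f(s) = μ{|f| > s}. -/
open MeasureTheory Set

/-- For a measurable `f` on a measure space and `t > 0`,
`t (f**(t) - f*(t)) = ∫_{f*(t)}^∞ μ_f(s) ds`. -/
theorem stmt0 {Ω : Type*} [MeasurableSpace Ω] (μ : Measure Ω) (f : Ω → ℝ)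
    (hf : Measurable f)
    (fstar : ℝ → ℝ)
    (hne : ∀ u : ℝ, 0 < u →
      {s : ℝ | 0 ≤ s ∧ μ {x | s < |f x|} ≤ ENNReal.ofReal u}.Nonempty)
    (hfstar : ∀ u : ℝ, 0 < u →
      fstar u = sInf {s : ℝ | 0 ≤ s ∧ μ {x | s < |f x|} ≤ ENNReal.ofReal u})
    (t : ℝ) (ht : 0 < t)
    (hint : IntegrableOn fstar (Ioo 0 t))
    (hdint : IntegrableOn (fun s => (μ {x | s < |f x|}).toReal) (Ioi (fstar t))) :
    t * ((1 / t) * (∫ s in Ioo (0:ℝ) t, fstar s) - fstar t)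
      = ∫ s in Ioi (fstar t), (μ {x | s < |f x|}).toReal := by
  set g : ℝ → ENNReal := fun u => μ {x | u < |f x|} with hg
  have gmono : Antitone g := fun u v huv =>
    measure_mono (fun x hx => lt_of_le_of_lt huv hx)
  have gmeas : Measurable g := gmono.measurable
  have hbdd : ∀ u : ℝ,
      BddBelow {s : ℝ | 0 ≤ s ∧ μ {x | s < |f x|} ≤ ENNReal.ofReal u} :=
    fun u => ⟨0, fun b hb => hb.1⟩
  have hstar_nonneg : ∀ u, 0 < u → 0 ≤ fstar u := by
    intro u hu; rw [hfstar u hu]; exact le_csInf (hne u hu) fun b hb => hb.1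
  have hkey : ∀ s : ℝ, 0 < s → ∀ u : ℝ, 0 ≤ u →
      (u < fstar s ↔ ENNReal.ofReal s < g u) := by
    intro s hs u hu
    constructor
    · intro h
      by_contra hc
      push_neg at hc
      have : fstar s ≤ u := by
        rw [hfstar s hs]; exact csInf_le (hbdd s) ⟨hu, hc⟩
      exact absurd h (not_lt.mpr this)
    · intro h
      by_contra hc
      push_neg at hc
      have hle : g u ≤ ENNReal.ofReal s := by
        have hU : {x | u < |f x|} = ⋃ n : ℕ, {x | u + 1/(n+1) < |f x|} := by
          ext x
          simp only [mem_setOf_eq, mem_iUnion]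
          constructor
          · intro hx
            obtain ⟨n, hn⟩ := exists_nat_one_div_lt (sub_pos.mpr hx)
            exact ⟨n, by push_cast at hn ⊢; linarith⟩
          · rintro ⟨n, hn⟩
            have hp : (0:ℝ) < 1/((n:ℝ)+1) := by positivity
            linarith
        have hmonoS : Monotone (fun n : ℕ => {x | u + 1/((n:ℝ)+1) < |f x|}) := by
          intro m n hmn x hx
          simp only [mem_setOf_eq] at hx ⊢
          have hcast : ((m:ℝ)+1) ≤ ((n:ℝ)+1) := by
            have := (Nat.cast_le (α := ℝ)).mpr hmn; linarith
          have : (1:ℝ)/((n:ℝ)+1) ≤ 1/((m:ℝ)+1) :=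
            one_div_le_one_div_of_le (by positivity) hcast
          linarith
        have step : ∀ n : ℕ, μ {x | u + 1/((n:ℝ)+1) < |f x|} ≤ ENNReal.ofReal s := by
          intro n
          have hlt : sInf {s' : ℝ | 0 ≤ s' ∧ μ {x | s' < |f x|} ≤ ENNReal.ofReal s}
              < u + 1/((n:ℝ)+1) := by
            rw [← hfstar s hs]
            have : (0:ℝ) < 1/((n:ℝ)+1) := by positivity
            linarith
          obtain ⟨v, hv, hvlt⟩ := exists_lt_of_csInf_lt (hne s hs) hlt
          calc μ {x | u + 1/((n:ℝ)+1) < |f x|} ≤ μ {x | v < |f x|} :=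
                measure_mono (fun x hx => lt_trans hvlt hx)
            _ ≤ ENNReal.ofReal s := hv.2
        calc g u = μ (⋃ n : ℕ, {x | u + 1/((n:ℝ)+1) < |f x|}) := by rw [hg]; simp only; rw [hU]
          _ = ⨆ n : ℕ, μ {x | u + 1/((n:ℝ)+1) < |f x|} := hmonoS.measure_iUnion
          _ ≤ ENNReal.ofReal s := iSup_le step
      exact absurd h (not_lt.mpr hle)
  have hstar_anti : ∀ u v : ℝ, 0 < u → u ≤ v → fstar v ≤ fstar u := by
    intro u v hu huv
    rw [hfstar u hu, hfstar v (lt_of_lt_of_le hu huv)]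
    exact csInf_le_csInf (hbdd v) (hne u hu)
      (fun b hb => ⟨hb.1, hb.2.trans (ENNReal.ofReal_le_ofReal huv)⟩)
  have h_gt : ∀ u : ℝ, fstar t < u → g u ≤ ENNReal.ofReal t := by
    intro u hu
    have hu0 : 0 ≤ u := le_trans (hstar_nonneg t ht) hu.le
    by_contra hc
    push_neg at hc
    exact absurd ((hkey t ht u hu0).mpr hc) (not_lt.mpr hu.le)
  set A : Set (ℝ × ℝ) :=
    {p : ℝ × ℝ | fstar t < p.2 ∧ 0 < p.1 ∧ ENNReal.ofReal p.1 < g p.2} with hA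
  have hAmeas : MeasurableSet A := by
    have h1 : MeasurableSet {p : ℝ × ℝ | fstar t < p.2} :=
      measurableSet_lt measurable_const measurable_snd
    have h2 : MeasurableSet {p : ℝ × ℝ | 0 < p.1} :=
      measurableSet_lt measurable_const measurable_fst
    have h3 : MeasurableSet {p : ℝ × ℝ | ENNReal.ofReal p.1 < g p.2} :=
      measurableSet_lt (ENNReal.measurable_ofReal.comp measurable_fst)
        (gmeas.comp measurable_snd)
    have : A = {p : ℝ × ℝ | fstar t < p.2} ∩
        ({p : ℝ × ℝ | 0 < p.1} ∩ {p : ℝ × ℝ | ENNReal.ofReal p.1 < g p.2}) := by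
      ext p; simp [hA, and_assoc]
    rw [this]; exact h1.inter (h2.inter h3)
  have hvol1 : (volume.prod volume) A
      = ∫⁻ s in Ioo (0:ℝ) t, ENNReal.ofReal (fstar s - fstar t) := by
    rw [Measure.prod_apply hAmeas]
    have hsl : ∀ s : ℝ, volume (Prod.mk s ⁻¹' A)
        = (Ioo (0:ℝ) t).indicator (fun s => ENNReal.ofReal (fstar s - fstar t)) s := by
      intro s
      by_cases hs : s ∈ Ioo (0:ℝ) t
      · rw [indicator_of_mem hs]
        have hpre : Prod.mk s ⁻¹' A = Ioo (fstar t) (fstar s) := by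
          ext u
          simp only [hA, mem_preimage, mem_setOf_eq, mem_Ioo]
          constructor
          · rintro ⟨h1, _, h3⟩
            exact ⟨h1, (hkey s hs.1 u (le_trans (hstar_nonneg t ht) h1.le)).mpr h3⟩
          · rintro ⟨h1, h2⟩
            exact ⟨h1, hs.1, (hkey s hs.1 u (le_trans (hstar_nonneg t ht) h1.le)).mp h2⟩
        rw [hpre, Real.volume_Ioo]
      · rw [indicator_of_notMem hs]
        have hpre : Prod.mk s ⁻¹' A = ∅ := by
          ext u
          simp only [hA, mem_preimage, mem_setOf_eq, mem_empty_iff_false, iff_false,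
            not_and]
          intro h1 h2
          have hts : t ≤ s := by
            by_contra hts
            push_neg at hts
            exact hs ⟨h2, hts⟩
          exact not_lt.mpr ((h_gt u h1).trans (ENNReal.ofReal_le_ofReal hts))
        rw [hpre, measure_empty]
    rw [lintegral_congr hsl, lintegral_indicator measurableSet_Ioo _]
  have hvol2 : (volume.prod volume) A = ∫⁻ u in Ioi (fstar t), g u := by
    rw [Measure.prod_apply_symm hAmeas]
    have hsl : ∀ u : ℝ, volume ((fun s => (s, u)) ⁻¹' A)
        = (Ioi (fstar t)).indicator g u := by
      intro u
      by_cases hu : u ∈ Ioi (fstar t)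
      · rw [indicator_of_mem hu]
        have hnetop : g u ≠ ⊤ :=
          ne_top_of_le_ne_top ENNReal.ofReal_ne_top (h_gt u hu)
        have hpre : (fun s => (s, u)) ⁻¹' A = Ioo (0:ℝ) ((g u).toReal) := by
          ext s
          simp only [hA, mem_preimage, mem_setOf_eq, mem_Ioo]
          constructor
          · rintro ⟨_, h2, h3⟩
            exact ⟨h2, (ENNReal.ofReal_lt_iff_lt_toReal h2.le hnetop).mp h3⟩
          · rintro ⟨h1, h2⟩
            exact ⟨hu, h1, (ENNReal.ofReal_lt_iff_lt_toReal h1.le hnetop).mpr h2⟩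
        rw [hpre, Real.volume_Ioo, sub_zero, ENNReal.ofReal_toReal hnetop]
      · rw [indicator_of_notMem hu]
        have hpre : (fun s => (s, u)) ⁻¹' A = ∅ := by
          ext s
          simp only [hA, mem_preimage, mem_setOf_eq, mem_empty_iff_false, iff_false,
            not_and]
          intro h1
          exact absurd h1 hu
        rw [hpre, measure_empty]
    rw [lintegral_congr hsl, lintegral_indicator measurableSet_Ioi _]
  have hconst : IntegrableOn (fun _ : ℝ => fstar t) (Ioo 0 t) :=
    (integrableOn_const_iff).mpr (Or.inr (by rw [Real.volume_Ioo]; exact ENNReal.ofReal_lt_top))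
  have hsub : ∫ s in Ioo (0:ℝ) t, (fstar s - fstar t)
      = (∫ s in Ioo (0:ℝ) t, fstar s) - t * fstar t := by
    rw [integral_sub hint hconst, setIntegral_const, Real.volume_real_Ioo_of_le ht.le, sub_zero,
      smul_eq_mul]
  have hnonneg : ∀ s ∈ Ioo (0:ℝ) t, 0 ≤ fstar s - fstar t :=
    fun s hs => sub_nonneg.mpr (hstar_anti s t hs.1 hs.2.le)
  have hL : ∫ s in Ioo (0:ℝ) t, (fstar s - fstar t)
      = ((volume.prod volume) A).toReal := by
    rw [hvol1, integral_eq_lintegral_of_nonneg_ae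
      ((ae_restrict_iff' measurableSet_Ioo).mpr (ae_of_all _ hnonneg))
      (hint.sub hconst).aestronglyMeasurable]
  have hR : ∫ u in Ioi (fstar t), (g u).toReal
      = ((volume.prod volume) A).toReal := by
    rw [hvol2, ← integral_toReal (gmeas.aemeasurable)
      ((ae_restrict_iff' measurableSet_Ioi).mpr (ae_of_all _
        (fun u hu => lt_of_le_of_lt (h_gt u hu) ENNReal.ofReal_lt_top)))]
  have halg : t * ((1/t) * (∫ s in Ioo (0:ℝ) t, fstar s) - fstar t)
      = ∫ s in Ioo (0:ℝ) t, (fstar s - fstar t) := by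
    rw [hsub]; field_simp
  rw [halg, hL, ← hR]
end

section
/- If a measurable function f on a σ-finite measure space satisfies ∫_0^∞ f**(s)^q ds/s < ∞ for some q ∈ [1,∞), then f = 0 almost everywhere. -/
open MeasureTheory Set
open scoped ENNReal NNReal

lemma aux_inv_top {δ : ℝ} (hδ : 0 < δ) :
    (∫⁻ t in Ioo (0:ℝ) δ, (ENNReal.ofReal t)⁻¹) = ⊤ := by
  by_contra hne
  have hmeas : MeasurableSet (Ioo (0:ℝ) δ) := measurableSet_Ioo
  have hint : IntegrableOn (fun x : ℝ => x⁻¹) (Ioo (0:ℝ) δ) := by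
    constructor
    · exact (Measurable.inv measurable_id).aestronglyMeasurable
    · rw [hasFiniteIntegral_iff_ofReal ((ae_restrict_iff' hmeas).2
        (Filter.Eventually.of_forall fun x hx => inv_nonneg.2 hx.1.le))]
      rw [setLIntegral_congr_fun hmeas
        (fun x hx => ENNReal.ofReal_inv_of_pos hx.1)]
      exact lt_top_iff_ne_top.2 hne
  have h2 : IntegrableOn (fun x : ℝ => x ^ (-1:ℝ)) (Ioo (0:ℝ) δ) := by
    apply hint.congr_fun _ measurableSet_Ioo
    intro x hx
    exact (Real.rpow_neg_one x).symm
  rw [intervalIntegral.integrableOn_Ioo_rpow_iff hδ] at h2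
  linarith

/-- If a measurable `f` on a σ-finite measure space satisfies
`∫_0^∞ f**(s)^q ds/s < ∞` for some `q ∈ [1,∞)`, then `f = 0` a.e. -/
theorem stmt4 {Ω : Type*} [MeasurableSpace Ω] (μ : Measure Ω) [SigmaFinite μ]
    (f : Ω → ℝ) (hf : Measurable f) (q : ℝ) (hq : 1 ≤ q)
    (fstar : ℝ → ℝ≥0∞)
    (hfstar : ∀ t : ℝ, fstar t =
      sInf {s : ℝ≥0∞ | μ {x | s < ENNReal.ofReal |f x|} ≤ ENNReal.ofReal t})
    (hfin : (∫⁻ t in Ioi (0:ℝ),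
        ((ENNReal.ofReal t)⁻¹ * ∫⁻ s in Ioo (0:ℝ) t, fstar s) ^ q
          * (ENNReal.ofReal t)⁻¹) < ⊤) :
    f =ᵐ[μ] 0 := by
  by_contra h
  simp only [Filter.EventuallyEq, ae_iff, Pi.zero_apply] at h
  -- find ε > 0 with positive measure
  have hsub : {x | ¬ f x = 0} ⊆ ⋃ n : ℕ, {x | (1:ℝ)/(n+1) < |f x|} := by
    intro x hx
    have : 0 < |f x| := abs_pos.2 hx
    obtain ⟨n, hn⟩ := exists_nat_one_div_lt this
    exact mem_iUnion.2 ⟨n, hn⟩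
  have hexn : ∃ n : ℕ, μ {x | (1:ℝ)/(n+1) < |f x|} ≠ 0 := by
    by_contra hall
    push_neg at hall
    exact h (measure_mono_null hsub (measure_iUnion_null hall))
  obtain ⟨n, hn⟩ := hexn
  set ε : ℝ := (1:ℝ)/(n+1) with hε
  have hεpos : 0 < ε := by positivity
  set a : ℝ≥0∞ := μ {x | ε < |f x|} with ha
  have hapos : 0 < a := pos_iff_ne_zero.2 hn
  obtain ⟨c, hc0, hca⟩ := exists_between hapos
  have hcT : c ≠ ⊤ := (lt_of_lt_of_le hca le_top).ne
  set δ : ℝ := c.toReal with hδdef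
  have hδpos : 0 < δ := ENNReal.toReal_pos hc0.ne' hcT
  have hδc : ENNReal.ofReal δ = c := ENNReal.ofReal_toReal hcT
  -- fstar lower bound
  have hkey : ∀ s : ℝ, s < δ → ENNReal.ofReal ε ≤ fstar s := by
    intro s hs
    rw [hfstar]
    refine le_sInf fun u hu => ?_
    by_contra hlt
    push_neg at hlt
    have hsub2 : {x | ε < |f x|} ⊆ {x | u < ENNReal.ofReal |f x|} := by
      intro x hx
      exact lt_of_lt_of_le hlt (ENNReal.ofReal_le_ofReal (le_of_lt hx))
    have h1 : a ≤ ENNReal.ofReal s := le_trans (measure_mono hsub2) hu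
    have h2 : ENNReal.ofReal s ≤ c := by
      rw [← hδc]; exact ENNReal.ofReal_le_ofReal hs.le
    exact absurd (lt_of_le_of_lt (h1.trans h2) hca) (lt_irrefl a)
  -- lower bound for the integrand
  have hbound : ∀ t ∈ Ioo (0:ℝ) δ,
      (ENNReal.ofReal ε) ^ q * (ENNReal.ofReal t)⁻¹ ≤
      ((ENNReal.ofReal t)⁻¹ * ∫⁻ s in Ioo (0:ℝ) t, fstar s) ^ q
        * (ENNReal.ofReal t)⁻¹ := by
    intro t ht
    have htpos : (0:ℝ≥0∞) < ENNReal.ofReal t := ENNReal.ofReal_pos.2 ht.1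
    have hinner : ENNReal.ofReal ε ≤
        (ENNReal.ofReal t)⁻¹ * ∫⁻ s in Ioo (0:ℝ) t, fstar s := by
      have hI : ENNReal.ofReal ε * ENNReal.ofReal t ≤
          ∫⁻ s in Ioo (0:ℝ) t, fstar s := by
        have := setLIntegral_const (μ := volume) (Ioo (0:ℝ) t) (ENNReal.ofReal ε)
        rw [Real.volume_Ioo, sub_zero] at this
        rw [← this]
        refine setLIntegral_mono' measurableSet_Ioo fun s hs => ?_
        exact hkey s (hs.2.trans ht.2)
      calc ENNReal.ofReal ε
          = (ENNReal.ofReal t)⁻¹ * (ENNReal.ofReal ε * ENNReal.ofReal t) := by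
            rw [mul_comm (ENNReal.ofReal ε), ← mul_assoc,
              ENNReal.inv_mul_cancel htpos.ne' ENNReal.ofReal_ne_top, one_mul]
        _ ≤ _ := mul_le_mul_right hI _
    exact mul_le_mul_left (ENNReal.rpow_le_rpow hinner (by linarith)) _
  -- conclude
  have hq0 : (0:ℝ) ≤ q := by linarith
  have hεq : (0:ℝ≥0∞) < (ENNReal.ofReal ε) ^ q :=
    ENNReal.rpow_pos (ENNReal.ofReal_pos.2 hεpos) ENNReal.ofReal_ne_top
  have hbig : (⊤:ℝ≥0∞) ≤ ∫⁻ t in Ioi (0:ℝ),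
      ((ENNReal.ofReal t)⁻¹ * ∫⁻ s in Ioo (0:ℝ) t, fstar s) ^ q
        * (ENNReal.ofReal t)⁻¹ := by
    calc (⊤:ℝ≥0∞) = (ENNReal.ofReal ε) ^ q * ∫⁻ t in Ioo (0:ℝ) δ,
          (ENNReal.ofReal t)⁻¹ := by
          rw [aux_inv_top hδpos, ENNReal.mul_top hεq.ne']
      _ = ∫⁻ t in Ioo (0:ℝ) δ, (ENNReal.ofReal ε) ^ q * (ENNReal.ofReal t)⁻¹ := by
          rw [lintegral_const_mul _ (by exact ENNReal.measurable_ofReal.inv : Measurable fun t : ℝ => (ENNReal.ofReal t)⁻¹)]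
      _ ≤ ∫⁻ t in Ioo (0:ℝ) δ,
          ((ENNReal.ofReal t)⁻¹ * ∫⁻ s in Ioo (0:ℝ) t, fstar s) ^ q
            * (ENNReal.ofReal t)⁻¹ :=
          setLIntegral_mono' measurableSet_Ioo hbound
      _ ≤ _ := lintegral_mono_set Ioo_subset_Ioi_self
  exact absurd (lt_of_le_of_lt hbig hfin) (lt_irrefl ⊤)
end

section
/- For the Euclidean isoperimetric profile I_n(t) = n γ_n^{1/n} t^{1-1/n} with γ_n = π^{n/2}/Γ(1+n/2), one has ∫_0^1 dt/(I_n(t)·(log(1/t))^{1/2}) = Γ(1+n/2)^{1/n}/√n, and this quantity is bounded by a constant independent of n; in particular sup_n ∫_0^1 dt/(I_n(t)(log(1/t))^{1/2}) < ∞. -/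
open MeasureTheory Set

lemma image_exp_neg : (fun u : ℝ => Real.exp (-u)) '' Ioi 0 = Ioo (0:ℝ) 1 := by
  ext x
  constructor
  · rintro ⟨u, hu, rfl⟩
    exact ⟨Real.exp_pos _, Real.exp_lt_one_iff.mpr (neg_neg_of_pos hu)⟩
  · rintro ⟨hx0, hx1⟩
    exact ⟨-Real.log x, by simpa using Real.log_neg hx0 hx1, by simp [Real.exp_log hx0]⟩

lemma key (n : ℕ) (hn : 1 ≤ n) :
    ∫ t in Ioo (0:ℝ) 1, 1 / (t ^ (1 - 1/(n:ℝ)) * Real.sqrt (Real.log (1/t)))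
      = Real.sqrt n * Real.sqrt Real.pi := by
  have hn0 : (0:ℝ) < n := by exact_mod_cast hn
  have hderiv : ∀ x ∈ Ioi (0:ℝ), HasDerivWithinAt (fun u : ℝ => Real.exp (-u))
      (-Real.exp (-x)) (Ioi 0) x := by
    intro x _
    simpa [Function.comp_def] using ((Real.hasDerivAt_exp (-x)).comp x (hasDerivAt_neg x)).hasDerivWithinAt
  have hinj : InjOn (fun u : ℝ => Real.exp (-u)) (Ioi 0) :=
    (Real.exp_injective.comp neg_injective).injOn
  have := MeasureTheory.integral_image_eq_integral_abs_deriv_smul measurableSet_Ioi hderiv hinj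
    (fun t => 1 / (t ^ (1 - 1/(n:ℝ)) * Real.sqrt (Real.log (1/t))))
  rw [image_exp_neg] at this
  rw [this]
  have congr1 : ∀ u ∈ Ioi (0:ℝ),
      |(-Real.exp (-u))| • (1 / ((Real.exp (-u)) ^ (1 - 1/(n:ℝ)) *
        Real.sqrt (Real.log (1/Real.exp (-u)))))
      = u ^ ((1/2:ℝ) - 1) * Real.exp (-((1/(n:ℝ)) * u)) := by
    intro u hu
    have hu0 : (0:ℝ) < u := hu
    have h1 : (1:ℝ)/Real.exp (-u) = Real.exp u := by
      rw [Real.exp_neg, one_div, inv_inv]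
    have h2 : (Real.exp (-u)) ^ (1 - 1/(n:ℝ)) = Real.exp (-u * (1 - 1/(n:ℝ))) :=
      (Real.exp_mul _ _).symm
    rw [h1, Real.log_exp, h2, abs_neg, abs_of_pos (Real.exp_pos _), smul_eq_mul,
      Real.sqrt_eq_rpow]
    rw [show (1/2:ℝ)-1 = -(1/2) by norm_num] at *
    rw [Real.rpow_neg hu0.le]
    have h3 : Real.exp (-u) = Real.exp (-((1/(n:ℝ))*u)) * Real.exp (-u*(1-1/(n:ℝ))) := by
      rw [← Real.exp_add]; ring_nf
    have hS : u ^ (1/2:ℝ) ≠ 0 := by positivity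
    rw [h3]
    field_simp
  rw [MeasureTheory.setIntegral_congr_fun measurableSet_Ioi congr1]
  have := Real.integral_rpow_mul_exp_neg_mul_Ioi (a := 1/2) (r := 1/(n:ℝ))
    (by norm_num) (by positivity)
  rw [this, Real.Gamma_one_half_eq, one_div_one_div, ← Real.sqrt_eq_rpow]

lemma gamma_bound (n : ℕ) (hn : 1 ≤ n) :
    Real.Gamma (1 + (n:ℝ)/2) ^ (1/(n:ℝ)) ≤ Real.sqrt n := by
  have hn0 : (0:ℝ) < n := by exact_mod_cast hn
  have hg : 0 < Real.Gamma (1 + (n:ℝ)/2) := Real.Gamma_pos_of_pos (by positivity)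
  have h1mem : (1:ℝ) ∈ Ioi (0:ℝ) := mem_Ioi.mpr one_pos
  have h2mem : ((n:ℝ)+1) ∈ Ioi (0:ℝ) := mem_Ioi.mpr (by positivity)
  have hconv := Real.convexOn_log_Gamma.2 h1mem h2mem
    (by norm_num : (0:ℝ) ≤ 1/2) (by norm_num : (0:ℝ) ≤ 1/2)
    (by norm_num : (1:ℝ)/2 + 1/2 = 1)
  have hx : ((1:ℝ)/2) • (1:ℝ) + ((1:ℝ)/2) • ((n:ℝ)+1) = 1 + (n:ℝ)/2 := by
    simp [smul_eq_mul]; ring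
  rw [hx] at hconv
  simp only [Function.comp, Real.Gamma_one, Real.log_one, smul_eq_mul, mul_zero, zero_add] at hconv
  have hfact : Real.Gamma ((n:ℝ)+1) = (n.factorial : ℝ) := by
    exact_mod_cast Real.Gamma_nat_eq_factorial n
  have hlogfact : Real.log (n.factorial : ℝ) ≤ (n:ℝ) * Real.log n := by
    calc Real.log (n.factorial : ℝ) ≤ Real.log ((n:ℝ)^n) := by
          apply Real.log_le_log (by exact_mod_cast n.factorial_pos)
          exact_mod_cast Nat.factorial_le_pow n
      _ = (n:ℝ) * Real.log n := by rw [Real.log_pow]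
  have hlog : Real.log (Real.Gamma (1 + (n:ℝ)/2)) ≤ ((n:ℝ)/2) * Real.log n := by
    calc Real.log (Real.Gamma (1 + (n:ℝ)/2)) ≤ 1/2 * Real.log (Real.Gamma ((n:ℝ)+1)) := hconv
      _ ≤ 1/2 * ((n:ℝ) * Real.log n) := by
          rw [hfact]; nlinarith [hlogfact]
      _ = ((n:ℝ)/2) * Real.log n := by ring
  have hG : Real.Gamma (1 + (n:ℝ)/2) ≤ (n:ℝ) ^ ((n:ℝ)/2) := by
    rw [Real.rpow_def_of_pos hn0]
    calc Real.Gamma (1 + (n:ℝ)/2) = Real.exp (Real.log (Real.Gamma (1 + (n:ℝ)/2))) :=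
          (Real.exp_log hg).symm
      _ ≤ Real.exp (Real.log (n:ℝ) * ((n:ℝ)/2)) := by
          apply Real.exp_le_exp.mpr; linarith [hlog]
  calc Real.Gamma (1 + (n:ℝ)/2) ^ (1/(n:ℝ))
      ≤ ((n:ℝ) ^ ((n:ℝ)/2)) ^ (1/(n:ℝ)) := Real.rpow_le_rpow hg.le hG (by positivity)
    _ = (n:ℝ) ^ (((n:ℝ)/2) * (1/(n:ℝ))) := (Real.rpow_mul hn0.le _ _).symm
    _ = (n:ℝ) ^ (1/2:ℝ) := by
        congr 1; field_simp
    _ = Real.sqrt n := (Real.sqrt_eq_rpow _).symm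

/-- For the Euclidean isoperimetric profile `I_n(t) = n γ_n^{1/n} t^{1-1/n}` with
`γ_n = π^{n/2}/Γ(1+n/2)`, one has
`∫_0^1 dt/(I_n(t) √(log(1/t))) = Γ(1+n/2)^{1/n}/√n`, and this is uniformly
bounded in `n`. -/
theorem stmt8 :
    (∀ n : ℕ, 1 ≤ n →
      (∫ t in Ioo (0:ℝ) 1,
          1 / (((n : ℝ) * (Real.pi ^ ((n:ℝ)/2) / Real.Gamma (1 + (n:ℝ)/2)) ^ (1/(n:ℝ))
                * t ^ (1 - 1/(n:ℝ))) * Real.sqrt (Real.log (1/t))))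
        = Real.Gamma (1 + (n:ℝ)/2) ^ (1/(n:ℝ)) / Real.sqrt n)
    ∧ ∃ C : ℝ, ∀ n : ℕ, 1 ≤ n →
        (∫ t in Ioo (0:ℝ) 1,
            1 / (((n : ℝ) * (Real.pi ^ ((n:ℝ)/2) / Real.Gamma (1 + (n:ℝ)/2)) ^ (1/(n:ℝ))
                  * t ^ (1 - 1/(n:ℝ))) * Real.sqrt (Real.log (1/t)))) ≤ C := by
  have main : ∀ n : ℕ, 1 ≤ n →
      (∫ t in Ioo (0:ℝ) 1,
          1 / (((n : ℝ) * (Real.pi ^ ((n:ℝ)/2) / Real.Gamma (1 + (n:ℝ)/2)) ^ (1/(n:ℝ))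
                * t ^ (1 - 1/(n:ℝ))) * Real.sqrt (Real.log (1/t))))
        = Real.Gamma (1 + (n:ℝ)/2) ^ (1/(n:ℝ)) / Real.sqrt n := by
    intro n hn
    have hn0 : (0:ℝ) < n := by exact_mod_cast hn
    have hg : 0 < Real.Gamma (1 + (n:ℝ)/2) := Real.Gamma_pos_of_pos (by positivity)
    set X := (Real.pi ^ ((n:ℝ)/2) / Real.Gamma (1 + (n:ℝ)/2)) ^ (1/(n:ℝ)) with hXdef
    have hrw : (fun t : ℝ => 1 / (((n : ℝ) * X * t ^ (1 - 1/(n:ℝ))) * Real.sqrt (Real.log (1/t))))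
        = fun t : ℝ => ((n:ℝ) * X)⁻¹ *
            (1 / (t ^ (1 - 1/(n:ℝ)) * Real.sqrt (Real.log (1/t)))) := by
      funext t
      simp only [one_div, mul_assoc, mul_inv]
    rw [hrw, MeasureTheory.integral_const_mul, key n hn]
    have hX : X = Real.sqrt Real.pi / Real.Gamma (1 + (n:ℝ)/2) ^ (1/(n:ℝ)) := by
      rw [hXdef, Real.div_rpow (by positivity) hg.le]
      congr 1
      rw [← Real.rpow_mul Real.pi_pos.le, show ((n:ℝ)/2) * (1/(n:ℝ)) = 1/2 by
        field_simp, ← Real.sqrt_eq_rpow]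
    rw [hX]
    have h1 : Real.sqrt (n:ℝ) ≠ 0 := (Real.sqrt_pos.mpr hn0).ne'
    have h2 : Real.sqrt Real.pi ≠ 0 := (Real.sqrt_pos.mpr Real.pi_pos).ne'
    have h3 : Real.Gamma (1 + (n:ℝ)/2) ^ (1/(n:ℝ)) ≠ 0 := by positivity
    field_simp
    linear_combination (1:ℝ) *
      (Real.mul_self_sqrt hn0.le)
  refine ⟨main, 1, fun n hn => ?_⟩
  rw [main n hn]
  have hn0 : (0:ℝ) < n := by exact_mod_cast hn
  exact (div_le_one (Real.sqrt_pos.mpr hn0)).mpr (gamma_bound n hn)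
end
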